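/- Let f: ℝⁿ → ℝⁿ be differentiable with a fixed point x⋆, and suppose M: ℝⁿ → ℝ^{n×n} takes symmetric positive definite values with Df(x)ᵀ M(f(x)) Df(x) - M(x) ⪯ -β M(x) for all x and some β ∈ (0,1). Then the matrix A := Df(x⋆) satisfies AᵀM(x⋆)A ⪯ (1-β) M(x⋆), and consequently A is Schur stable. -/

import Mathlib

open Matrix Complex ComplexOrder

lemma map_mul_ofReal {n : ℕ} (A B : Matrix (Fin n) (Fin n) ℝ) :
    (A * B).map Complex.ofReal = (A.map Complex.ofReal) * (B.map Complex.ofReal) := by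
  ext i j
  simp [Matrix.mul_apply]

lemma conjTranspose_map_ofReal {n : ℕ} (A : Matrix (Fin n) (Fin n) ℝ) :
    (A.map Complex.ofReal)ᴴ = Aᵀ.map Complex.ofReal := by
  ext i j
  simp [conjTranspose, Matrix.map_apply]

lemma psd_map {n : ℕ} {P : Matrix (Fin n) (Fin n) ℝ} (h : P.PosSemidef) :
    (P.map Complex.ofReal).PosSemidef := by
  obtain ⟨m, w, rfl⟩ := posSemidef_iff_eq_sum_vecMulVec.mp h
  refine posSemidef_iff_eq_sum_vecMulVec.mpr ⟨m, fun i j => (w i j : ℂ), ?_⟩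
  ext a b
  simp [Matrix.sum_apply, vecMulVec_apply]

def SchurStable {N : ℕ} (A : Matrix (Fin N) (Fin N) ℝ) : Prop :=
  ∀ μ ∈ spectrum ℂ (A.map Complex.ofReal), ‖μ‖ < 1

theorem stmt8 {n : ℕ} (f : (Fin n → ℝ) → (Fin n → ℝ))
    (F : (Fin n → ℝ) → Matrix (Fin n) (Fin n) ℝ)
    (M : (Fin n → ℝ) → Matrix (Fin n) (Fin n) ℝ)
    (xstar : Fin n → ℝ) (hfix : f xstar = xstar)
    (β : ℝ) (hβ : β ∈ Set.Ioo (0 : ℝ) 1)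
    (hf : ∀ x, HasFDerivAt f (LinearMap.toContinuousLinearMap (F x).mulVecLin) x)
    (hMsymm : ∀ x, (M x)ᵀ = M x) (hM : ∀ x, (M x).PosDef)
    (hcontr : ∀ x, ((1 - β) • M x - (F x)ᵀ * M (f x) * F x).PosSemidef) :
    ((1 - β) • M xstar - (F xstar)ᵀ * M xstar * F xstar).PosSemidef ∧
      SchurStable (F xstar) := by
  have hP : ((1 - β) • M xstar - (F xstar)ᵀ * M xstar * F xstar).PosSemidef := by
    have := hcontr xstar; rwa [hfix] at this
  refine ⟨hP, ?_⟩
  intro μ hμ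
  set A := F xstar with hA
  set S := M xstar with hS
  set A' := A.map Complex.ofReal with hA'
  set S' := S.map Complex.ofReal with hS'
  -- get an eigenvector
  rw [spectrum.mem_iff] at hμ
  have hdet : (algebraMap ℂ (Matrix (Fin n) (Fin n) ℂ) μ - A').det = 0 := by
    by_contra h
    exact hμ ((Matrix.isUnit_iff_isUnit_det _).mpr (isUnit_iff_ne_zero.mpr h))
  obtain ⟨v, hv0, hv⟩ := (Matrix.exists_mulVec_eq_zero_iff).mpr hdet
  have hAv : A' *ᵥ v = μ • v := by
    have : (algebraMap ℂ (Matrix (Fin n) (Fin n) ℂ) μ - A') *ᵥ v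
        = μ • v - A' *ᵥ v := by
      rw [Matrix.sub_mulVec]
      congr 1
      ext i
      simp [Matrix.algebraMap_eq_diagonal, Matrix.mulVec_diagonal]
    rw [this] at hv
    exact (sub_eq_zero.mp hv).symm
  -- quadratic form values
  have hSpsd : S'.PosSemidef := psd_map (hM xstar).posSemidef
  set c := star v ⬝ᵥ S' *ᵥ v with hc
  have hc0 : 0 ≤ c := hSpsd.dotProduct_mulVec_nonneg v
  have hcne : c ≠ 0 := by
    intro h
    have hz : S' *ᵥ v = 0 := (hSpsd.dotProduct_mulVec_zero_iff v).mp h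
    have hdetS : S'.det ≠ 0 := by
      show (Complex.ofRealHom.mapMatrix S).det ≠ 0
      rw [← RingHom.map_det]
      simpa using (hM xstar).det_pos.ne'
    exact hdetS (Matrix.exists_mulVec_eq_zero_iff.mp ⟨v, hv0, hz⟩)
  -- the contraction inequality at v
  have hPm : (((1 - β) • S - Aᵀ * S * A).map Complex.ofReal).PosSemidef := psd_map hP
  have hmapeq : ((1 - β) • S - Aᵀ * S * A).map Complex.ofReal
      = ((1 - β : ℝ) : ℂ) • S' - A'ᴴ * S' * A' := by
    rw [conjTranspose_map_ofReal, ← map_mul_ofReal, ← map_mul_ofReal]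
    ext i j
    simp [Matrix.map_apply]
    exact Or.inl rfl
  have hq : star v ⬝ᵥ (A'ᴴ * S' * A') *ᵥ v = (starRingEnd ℂ μ) * μ * c := by
    have h1 : (A'ᴴ * S' * A') *ᵥ v = A'ᴴ *ᵥ (S' *ᵥ (A' *ᵥ v)) := by
      rw [← Matrix.mulVec_mulVec, ← Matrix.mulVec_mulVec]
    rw [h1, Matrix.dotProduct_mulVec, ← Matrix.star_mulVec, hAv]
    simp [Matrix.mulVec_smul, smul_dotProduct, dotProduct_smul, hc,
      Matrix.dotProduct_mulVec, star_smul, Matrix.smul_vecMul]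
    ring
  have hineq := hPm.dotProduct_mulVec_nonneg v
  rw [hmapeq] at hineq
  have hval : star v ⬝ᵥ (((1 - β : ℝ) : ℂ) • S' - A'ᴴ * S' * A') *ᵥ v
      = ((1 - β : ℝ) : ℂ) * c - (starRingEnd ℂ μ) * μ * c := by
    rw [Matrix.sub_mulVec, dotProduct_sub, hq]
    congr 1
    rw [Matrix.smul_mulVec, dotProduct_smul, hc, smul_eq_mul]
  rw [hval] at hineq
  -- extract real inequality
  have hconj : (starRingEnd ℂ μ) * μ = ((Complex.normSq μ : ℝ) : ℂ) := by
    rw [mul_comm, Complex.mul_conj]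
  rw [hconj] at hineq
  have hre : Complex.normSq μ * c.re ≤ (1 - β) * c.re := by
    have := hineq.1
    simpa [Complex.sub_re, Complex.ofReal_mul, Complex.mul_re] using this
  have hcre : 0 < c.re := by
    rcases lt_or_eq_of_le hc0.1 with h | h
    · simpa using h
    · exfalso; exact hcne (Complex.ext h.symm (by simpa using hc0.2.symm))
  have hsq : Complex.normSq μ ≤ 1 - β := by nlinarith
  have hnorm : ‖μ‖ ^ 2 = Complex.normSq μ := by
    rw [Complex.sq_norm]
  nlinarith [norm_nonneg μ, hβ.1]
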